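/- Let a, b, c, d be complex numbers with |a| = |b| = |c| = |d| = 1, a ≠ c, b ≠ d, a + c ≠ 0, b + d ≠ 0, ab ≠ cd and ad ≠ bc. Then the four points c1 := 2ac/(a+c), c2 := 2bd/(b+d), w1 := (ab(c+d) − cd(a+b))/(ab − cd) and w3 := (ad(b+c) − bc(a+d))/(ad − bc) are collinear (collinear over ℝ, viewing ℂ as the real plane). -/

import Mathlib

private lemma exists_real_smul_aux {p v : ℂ} (hv : v ≠ 0)
    (h : p * (starRingEnd ℂ) v = (starRingEnd ℂ) p * v) : ∃ r : ℝ, p = r • v := by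
  have him : (starRingEnd ℂ) (p * (starRingEnd ℂ) v) = p * (starRingEnd ℂ) v := by
    rw [map_mul, Complex.conj_conj, h]
  have hre : ((p * (starRingEnd ℂ) v).re : ℂ) = p * (starRingEnd ℂ) v :=
    Complex.conj_eq_iff_re.mp him
  refine ⟨(p * (starRingEnd ℂ) v).re / Complex.normSq v, ?_⟩
  have hns : (Complex.normSq v : ℂ) ≠ 0 := by
    simp [Complex.normSq_eq_zero, hv]
  rw [Complex.real_smul]
  push_cast
  rw [div_mul_eq_mul_div, hre]
  rw [mul_assoc, mul_comm ((starRingEnd ℂ) v) v, Complex.mul_conj]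
  field_simp


set_option maxHeartbeats 2000000

open Complex

/-- The centers `c1 = 2ac/(a+c)`, `c2 = 2bd/(b+d)` of the orthogonal circles through
`a, c` and `b, d`, and the line intersections `w1 = LIS[a,b,c,d]`, `w3 = LIS[a,d,b,c]`
are collinear (over ℝ, viewing ℂ as the real plane). -/
theorem centers_and_intersections_collinear (a b c d : ℂ)
    (ha : ‖a‖ = 1) (hb : ‖b‖ = 1)
    (hc : ‖c‖ = 1) (hd : ‖d‖ = 1)
    (hac : a ≠ c) (hbd : b ≠ d) (hac' : a + c ≠ 0) (hbd' : b + d ≠ 0)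
    (h1 : a * b ≠ c * d) (h3 : a * d ≠ b * c) :
    let c1 := 2 * a * c / (a + c)
    let c2 := 2 * b * d / (b + d)
    let w1 := (a * b * (c + d) - c * d * (a + b)) / (a * b - c * d)
    let w3 := (a * d * (b + c) - b * c * (a + d)) / (a * d - b * c)
    Collinear ℝ ({c1, c2, w1, w3} : Set ℂ) := by
  intro c1 c2 w1 w3
  have ha0 : a ≠ 0 := by intro h; simp [h] at ha
  have hb0 : b ≠ 0 := by intro h; simp [h] at hb
  have hc0 : c ≠ 0 := by intro h; simp [h] at hc
  have hd0 : d ≠ 0 := by intro h; simp [h] at hd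
  have h1' : a * b - c * d ≠ 0 := sub_ne_zero.mpr h1
  have h3' : a * d - b * c ≠ 0 := sub_ne_zero.mpr h3
  have hca : (starRingEnd ℂ) a = a⁻¹ := (Complex.inv_eq_conj ha).symm
  have hcb : (starRingEnd ℂ) b = b⁻¹ := (Complex.inv_eq_conj hb).symm
  have hcc : (starRingEnd ℂ) c = c⁻¹ := (Complex.inv_eq_conj hc).symm
  have hcd : (starRingEnd ℂ) d = d⁻¹ := (Complex.inv_eq_conj hd).symm
  -- conjugates of the four points
  have K1 : (starRingEnd ℂ) c1 = 2 / (a + c) := by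
    show (starRingEnd ℂ) (2 * a * c / (a + c)) = 2 / (a + c)
    simp only [map_div₀, map_mul, map_add, map_ofNat, hca, hcc]
    rw [inv_add_inv ha0 hc0]
    field_simp
  have K2 : (starRingEnd ℂ) c2 = 2 / (b + d) := by
    show (starRingEnd ℂ) (2 * b * d / (b + d)) = 2 / (b + d)
    simp only [map_div₀, map_mul, map_add, map_ofNat, hcb, hcd]
    rw [inv_add_inv hb0 hd0]
    field_simp
  have hden1 : a⁻¹ * b⁻¹ - c⁻¹ * d⁻¹ ≠ 0 := by
    rw [sub_ne_zero]
    intro h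
    apply h1
    field_simp at h
    linear_combination -h
  have hden3 : a⁻¹ * d⁻¹ - b⁻¹ * c⁻¹ ≠ 0 := by
    rw [sub_ne_zero]
    intro h
    apply h3
    field_simp at h
    linear_combination -h
  have K3 : (starRingEnd ℂ) w1 = (a + b - (c + d)) / (a * b - c * d) := by
    show (starRingEnd ℂ) ((a * b * (c + d) - c * d * (a + b)) / (a * b - c * d)) = _
    simp only [map_div₀, map_mul, map_add, map_sub, hca, hcb, hcc, hcd]
    rw [div_eq_div_iff hden1 h1']
    field_simp
    ring
  have K4 : (starRingEnd ℂ) w3 = (a + d - (b + c)) / (a * d - b * c) := by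
    show (starRingEnd ℂ) ((a * d * (b + c) - b * c * (a + d)) / (a * d - b * c)) = _
    simp only [map_div₀, map_mul, map_add, map_sub, hca, hcb, hcc, hcd]
    rw [div_eq_div_iff hden3 h3']
    field_simp
    ring
  -- c2 ≠ c1
  have hv : c2 - c1 ≠ 0 := by
    rw [sub_ne_zero]
    intro heq
    have hconj : (2 : ℂ) / (b + d) = 2 / (a + c) := by rw [← K1, ← K2, heq]
    rw [div_eq_div_iff hbd' hac'] at hconj
    have hsum : a + c = b + d := by linear_combination hconj / 2
    have horig : 2 * b * d * (a + c) = 2 * a * c * (b + d) := by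
      have := heq
      rw [div_eq_div_iff hbd' hac'] at this
      exact this
    have hprod : b * d = a * c := by
      rw [hsum] at horig
      have h2 : (b + d) ≠ 0 := hbd'
      have := mul_right_cancel₀ h2 horig
      linear_combination this / 2
    have hfact : (a - b) * (a - d) = 0 := by
      linear_combination hprod + a * hsum
    rcases mul_eq_zero.mp hfact with h | h
    · have hab : a = b := sub_eq_zero.mp h
      have hcd' : c = d := by linear_combination hsum - hab
      exact h3 (by rw [hab, hcd'])
    · have had : a = d := sub_eq_zero.mp h
      have hcb' : c = b := by linear_combination hsum - had
      exact h1 (by linear_combination b * had - d * hcb')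
  -- collinearity
  have hmem : c1 ∈ ({c1, c2, w1, w3} : Set ℂ) := by simp
  rw [collinear_iff_of_mem hmem]
  refine ⟨c2 - c1, ?_⟩
  intro p hp
  simp only [Set.mem_insert_iff, Set.mem_singleton_iff] at hp
  rcases hp with rfl | rfl | rfl | rfl
  · exact ⟨0, by simp⟩
  · exact ⟨1, by simp⟩
  · have key : (w1 - c1) * (starRingEnd ℂ) (c2 - c1) =
        (starRingEnd ℂ) (w1 - c1) * (c2 - c1) := by
      rw [map_sub, map_sub, K1, K2, K3]
      show ((a * b * (c + d) - c * d * (a + b)) / (a * b - c * d) -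
          2 * a * c / (a + c)) * (2 / (b + d) - 2 / (a + c)) =
        ((a + b - (c + d)) / (a * b - c * d) - 2 / (a + c)) *
          (2 * b * d / (b + d) - 2 * a * c / (a + c))
      field_simp
      ring
    obtain ⟨r, hr⟩ := exists_real_smul_aux hv key
    exact ⟨r, by rw [vadd_eq_add, ← hr]; ring⟩
  · have key : (w3 - c1) * (starRingEnd ℂ) (c2 - c1) =
        (starRingEnd ℂ) (w3 - c1) * (c2 - c1) := by
      rw [map_sub, map_sub, K1, K2, K4]
      show ((a * d * (b + c) - b * c * (a + d)) / (a * d - b * c) -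
          2 * a * c / (a + c)) * (2 / (b + d) - 2 / (a + c)) =
        ((a + d - (b + c)) / (a * d - b * c) - 2 / (a + c)) *
          (2 * b * d / (b + d) - 2 * a * c / (a + c))
      field_simp
      ring
    obtain ⟨r, hr⟩ := exists_real_smul_aux hv key
    exact ⟨r, by rw [vadd_eq_add, ← hr]; ring⟩
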